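/- Let T_0 > 0, T_w > 0, 0 < r ≤ 1, and v ∈ R. Then ∫_0^∞ (u/(r T_w)) · exp( -( v^2 + (1-r) u^2 ) / (2 T_w r) ) · I_0( sqrt(1-r) · v · u / (T_w r) ) · (1/T_0) · exp( -u^2/(2 T_0) ) du = (1/(T_0 (1-r) + T_w r)) · exp( -v^2 / (2 [T_0 (1-r) + T_w r]) ). -/

import Mathlib

open MeasureTheory Real

/-- Modified Bessel function of the first kind of order zero,
`I₀(y) = (1/π) ∫_0^π e^{y cos φ} dφ`. -/
noncomputable def besselI0 (y : ℝ) : ℝ :=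
  (1 / Real.pi) * ∫ φ in (0:ℝ)..Real.pi, Real.exp (y * Real.cos φ)

lemma gauss_linear (β c : ℝ) (hβ : 0 < β) :
    ∫ x : ℝ, Real.exp (-β * x ^ 2 + c * x)
      = Real.sqrt (π / β) * Real.exp (c ^ 2 / (4 * β)) := by
  have h : ∀ x : ℝ, Real.exp (-β * x ^ 2 + c * x)
      = Real.exp (c ^ 2 / (4 * β)) * Real.exp (-β * (x - c / (2 * β)) ^ 2) := by
    intro x
    rw [← Real.exp_add]
    congr 1
    field_simp
    ring
  simp_rw [h]
  rw [integral_const_mul,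
    integral_sub_right_eq_self (fun x : ℝ => Real.exp (-β * x ^ 2)) (c / (2 * β)),
    integral_gaussian]
  ring

lemma gauss2 (β c : ℝ) (hβ : 0 < β) :
    ∫ w : ℝ × ℝ, Real.exp (-β * (w.1 ^ 2 + w.2 ^ 2) + c * w.1)
      = (π / β) * Real.exp (c ^ 2 / (4 * β)) := by
  have h : ∀ w : ℝ × ℝ, Real.exp (-β * (w.1 ^ 2 + w.2 ^ 2) + c * w.1)
      = Real.exp (-β * w.1 ^ 2 + c * w.1) * Real.exp (-β * w.2 ^ 2) := by
    intro w; rw [← Real.exp_add]; ring_nf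
  simp_rw [h]
  rw [Measure.volume_eq_prod, integral_prod_mul (fun x : ℝ => Real.exp (-β * x ^ 2 + c * x)) (fun y : ℝ => Real.exp (-β * y ^ 2)), gauss_linear β c hβ, integral_gaussian]
  rw [show Real.sqrt (π / β) * Real.exp (c ^ 2 / (4 * β)) * Real.sqrt (π / β)
      = Real.sqrt (π / β) * Real.sqrt (π / β) * Real.exp (c ^ 2 / (4 * β)) by ring,
    Real.mul_self_sqrt (div_nonneg pi_pos.le hβ.le)]

lemma polar_gauss (β c : ℝ) (hβ : 0 < β) :
    ∫ p in Set.Ioi (0:ℝ) ×ˢ Set.Ioo (-π) π,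
        p.1 * Real.exp (-β * p.1 ^ 2 + c * (p.1 * Real.cos p.2))
      = (π / β) * Real.exp (c ^ 2 / (4 * β)) := by
  rw [← gauss2 β c hβ,
    ← integral_comp_polarCoord_symm (fun w : ℝ × ℝ =>
        Real.exp (-β * (w.1 ^ 2 + w.2 ^ 2) + c * w.1))]
  rw [polarCoord_target]
  congr 1
  ext p
  rw [polarCoord_symm_apply, smul_eq_mul]
  congr 2
  have : (p.1 * Real.cos p.2) ^ 2 + (p.1 * Real.sin p.2) ^ 2
      = p.1 ^ 2 * (Real.sin p.2 ^ 2 + Real.cos p.2 ^ 2) := by ring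
  rw [this, Real.sin_sq_add_cos_sq, mul_one]

lemma inner_angle (y : ℝ) :
    ∫ φ in Set.Ioo (-π) π, Real.exp (y * Real.cos φ) = π * (2 * besselI0 y) := by
  have hc : ∀ a b : ℝ, IntervalIntegrable (fun φ => Real.exp (y * Real.cos φ)) volume a b :=
    fun a b => (Real.continuous_exp.comp (continuous_const.mul Real.continuous_cos)).intervalIntegrable a b
  have h1 : ∫ φ in Set.Ioo (-π) π, Real.exp (y * Real.cos φ)
      = ∫ φ in (-π)..π, Real.exp (y * Real.cos φ) := by
    rw [intervalIntegral.integral_of_le (by linarith [pi_pos] : -π ≤ π),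
      MeasureTheory.integral_Ioc_eq_integral_Ioo]
  have h2 : ∫ φ in (-π)..(0:ℝ), Real.exp (y * Real.cos φ)
      = ∫ φ in (0:ℝ)..π, Real.exp (y * Real.cos φ) := by
    have := intervalIntegral.integral_comp_neg (a := (0:ℝ)) (b := π)
      (fun φ => Real.exp (y * Real.cos φ))
    simpa [Real.cos_neg] using this.symm
  rw [h1, ← intervalIntegral.integral_add_adjacent_intervals (hc (-π) 0) (hc 0 π), h2,
    besselI0]
  field_simp
  ring

lemma integrable_linear_gauss (β c : ℝ) (hβ : 0 < β) :
    Integrable (fun x : ℝ => x * Real.exp (-β * x ^ 2 + c * x)) := by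
  set d : ℝ := c / (2 * β) with hd
  have h1 : Integrable (fun y : ℝ => (y + d) * Real.exp (-β * y ^ 2)) := by
    simpa [add_mul, Pi.add_def] using (integrable_mul_exp_neg_mul_sq hβ).add
      ((integrable_exp_neg_mul_sq hβ).const_mul d)
  have h2 := h1.comp_sub_right d
  have h3 := h2.const_mul (Real.exp (c ^ 2 / (4 * β)))
  refine h3.congr (Filter.Eventually.of_forall fun x => ?_)
  show Real.exp (c ^ 2 / (4 * β)) * ((x - d + d) * Real.exp (-β * (x - d) ^ 2))
      = x * Real.exp (-β * x ^ 2 + c * x)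
  rw [sub_add_cancel, mul_left_comm, ← Real.exp_add]
  congr 2
  rw [hd]
  field_simp
  ring

lemma integrableOn_polar (β c : ℝ) (hβ : 0 < β) :
    IntegrableOn (fun p : ℝ × ℝ => p.1 * Real.exp (-β * p.1 ^ 2 + c * (p.1 * Real.cos p.2)))
      (Set.Ioi (0:ℝ) ×ˢ Set.Ioo (-π) π) := by
  rw [IntegrableOn, Measure.volume_eq_prod, ← Measure.prod_restrict]
  have hcont : Continuous (fun p : ℝ × ℝ =>
      p.1 * Real.exp (-β * p.1 ^ 2 + c * (p.1 * Real.cos p.2))) := by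
    fun_prop
  refine Integrable.mono'
    (g := fun p : ℝ × ℝ => (p.1 * Real.exp (-β * p.1 ^ 2 + |c| * p.1)) * (1 : ℝ)) ?_
    hcont.aestronglyMeasurable ?_
  · exact Integrable.mul_prod ((integrable_linear_gauss β |c| hβ).integrableOn)
      (integrableOn_const measure_Ioo_lt_top.ne)
  · rw [Measure.prod_restrict]
    rw [ae_restrict_iff' (measurableSet_Ioi.prod measurableSet_Ioo)]
    refine Filter.Eventually.of_forall fun p hp => ?_
    have hp1 : 0 < p.1 := hp.1
    have hb : c * (p.1 * Real.cos p.2) ≤ |c| * p.1 := by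
      calc c * (p.1 * Real.cos p.2) ≤ |c * (p.1 * Real.cos p.2)| := le_abs_self _
        _ = |c| * (p.1 * |Real.cos p.2|) := by
            rw [abs_mul, abs_mul, abs_of_pos hp1]
        _ ≤ |c| * (p.1 * 1) := by
            gcongr
            exact abs_cos_le_one _
        _ = |c| * p.1 := by ring
    rw [mul_one, Real.norm_eq_abs, abs_mul, abs_of_pos hp1,
      Real.abs_exp]
    exact mul_le_mul_of_nonneg_left (Real.exp_le_exp.2 (by linarith)) hp1.le

lemma key_bessel (β c : ℝ) (hβ : 0 < β) :
    ∫ u in Set.Ioi (0:ℝ), u * Real.exp (-β * u ^ 2) * besselI0 (c * u)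
      = (1 / (2 * β)) * Real.exp (c ^ 2 / (4 * β)) := by
  have hfub := setIntegral_prod (μ := (volume : Measure ℝ)) (ν := (volume : Measure ℝ))
    (fun p : ℝ × ℝ => p.1 * Real.exp (-β * p.1 ^ 2 + c * (p.1 * Real.cos p.2)))
    (by
      have := integrableOn_polar β c hβ
      rwa [IntegrableOn, Measure.volume_eq_prod] at this)
  have hpg := polar_gauss β c hβ
  rw [Measure.volume_eq_prod] at hpg
  rw [hfub] at hpg
  have hin : ∀ u : ℝ, (∫ φ in Set.Ioo (-π) π, u * Real.exp (-β * u ^ 2 + c * (u * Real.cos φ)))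
      = (2 * π) * (u * Real.exp (-β * u ^ 2) * besselI0 (c * u)) := by
    intro u
    have : ∀ φ : ℝ, u * Real.exp (-β * u ^ 2 + c * (u * Real.cos φ))
        = (u * Real.exp (-β * u ^ 2)) * Real.exp ((c * u) * Real.cos φ) := by
      intro φ
      rw [Real.exp_add]
      ring
    simp_rw [this]
    rw [integral_const_mul, inner_angle (c * u)]
    ring
  simp_rw [hin] at hpg
  rw [integral_const_mul] at hpg
  have h2π : (2 * π) ≠ 0 := by positivity
  apply mul_left_cancel₀ h2π
  rw [hpg]
  field_simp


/-- Normal-component computation in the boundary-flux identity for the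
Cercignani–Lampis kernel: for `T₀, T_w > 0`, `0 < r ≤ 1`, `v ∈ ℝ`,
`∫_0^∞ (u/(rT_w)) exp(-(v²+(1-r)u²)/(2T_w r)) I₀(√(1-r) v u/(T_w r))
       (1/T₀) exp(-u²/(2T₀)) du
  = (1/(T₀(1-r) + T_w r)) exp(-v²/(2[T₀(1-r) + T_w r]))`. -/
theorem CL_normal_flux (T0 Tw r : ℝ) (hT0 : 0 < T0) (hTw : 0 < Tw)
    (hr : 0 < r) (hr' : r ≤ 1) (v : ℝ) :
    ∫ u in Set.Ioi (0:ℝ),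
        (u / (r * Tw)) * Real.exp (-(v ^ 2 + (1 - r) * u ^ 2) / (2 * Tw * r))
          * besselI0 (Real.sqrt (1 - r) * v * u / (Tw * r))
          * ((1 / T0) * Real.exp (-u ^ 2 / (2 * T0)))
      = (1 / (T0 * (1 - r) + Tw * r))
          * Real.exp (-v ^ 2 / (2 * (T0 * (1 - r) + Tw * r))) := by
  have h1r : (0:ℝ) ≤ 1 - r := by linarith
  set D : ℝ := T0 * (1 - r) + Tw * r with hD
  have hDpos : 0 < D := by nlinarith
  set β : ℝ := D / (2 * Tw * r * T0) with hβdef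
  have hβ : 0 < β := by positivity
  set c : ℝ := Real.sqrt (1 - r) * v / (Tw * r) with hc
  have hpt : ∀ u : ℝ,
      (u / (r * Tw)) * Real.exp (-(v ^ 2 + (1 - r) * u ^ 2) / (2 * Tw * r))
          * besselI0 (Real.sqrt (1 - r) * v * u / (Tw * r))
          * ((1 / T0) * Real.exp (-u ^ 2 / (2 * T0)))
        = ((1 / (r * Tw * T0)) * Real.exp (-v ^ 2 / (2 * Tw * r)))
          * (u * Real.exp (-β * u ^ 2) * besselI0 (c * u)) := by
    intro u
    have harg : Real.sqrt (1 - r) * v * u / (Tw * r) = c * u := by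
      rw [hc]; ring
    have he : Real.exp (-(v ^ 2 + (1 - r) * u ^ 2) / (2 * Tw * r))
          * Real.exp (-u ^ 2 / (2 * T0))
        = Real.exp (-v ^ 2 / (2 * Tw * r)) * Real.exp (-β * u ^ 2) := by
      rw [← Real.exp_add, ← Real.exp_add]
      congr 1
      rw [hβdef, hD]
      field_simp
      ring
    rw [harg]
    calc (u / (r * Tw)) * Real.exp (-(v ^ 2 + (1 - r) * u ^ 2) / (2 * Tw * r))
          * besselI0 (c * u) * ((1 / T0) * Real.exp (-u ^ 2 / (2 * T0)))
        = (1 / (r * Tw * T0))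
            * (Real.exp (-(v ^ 2 + (1 - r) * u ^ 2) / (2 * Tw * r))
              * Real.exp (-u ^ 2 / (2 * T0))) * (u * besselI0 (c * u)) := by ring
      _ = _ := by rw [he]; ring
  simp_rw [hpt]
  rw [integral_const_mul, key_bessel β c hβ]
  have hc2 : c ^ 2 = (1 - r) * v ^ 2 / (Tw * r) ^ 2 := by
    rw [hc, div_pow, mul_pow, Real.sq_sqrt h1r]
  have hA : (1 / (r * Tw * T0)) * (1 / (2 * β)) = 1 / D := by
    rw [hβdef]
    field_simp
  have hB : -v ^ 2 / (2 * Tw * r) + c ^ 2 / (4 * β) = -v ^ 2 / (2 * D) := by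
    rw [hc2, hβdef, hD]
    have hDne : T0 * (1 - r) + Tw * r ≠ 0 := by rw [← hD]; exact hDpos.ne'
    field_simp
    ring
  calc (1 / (r * Tw * T0)) * Real.exp (-v ^ 2 / (2 * Tw * r))
        * ((1 / (2 * β)) * Real.exp (c ^ 2 / (4 * β)))
      = ((1 / (r * Tw * T0)) * (1 / (2 * β)))
        * (Real.exp (-v ^ 2 / (2 * Tw * r)) * Real.exp (c ^ 2 / (4 * β))) := by ring
    _ = (1 / D) * Real.exp (-v ^ 2 / (2 * Tw * r) + c ^ 2 / (4 * β)) := by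
        rw [hA, ← Real.exp_add]
    _ = (1 / D) * Real.exp (-v ^ 2 / (2 * D)) := by rw [hB]
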